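/- Let $r(t) = r_0 + t$ and suppose $s : [0,\infty) \to \mathbb{R}$ solves $\dot{s}(t) = F(r(t), s(t))$ where $F : \mathbb{R}_+ \times \mathbb{R} \to [0, \infty)$ is continuous, and suppose there is a continuous $p : \mathbb{R}_+ \times \mathbb{R} \to [0,1]$ with $|F(r,s) - p(r,s)| \leq \frac{p(r,s)}{1 + \cosh^2 r}$, $p$ nondecreasing in $s$, and $\int_0^\infty p(r, s_0)\, dr = \infty$ for every $s_0$. Then $s(t) \to \infty$ as $t \to \infty$. -/

import Mathlib

theorem trajectory_s_tendsto_atTop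
    (r0 : ℝ) (hr0 : 0 ≤ r0)
    (s : ℝ → ℝ) (F p : ℝ → ℝ → ℝ)
    (hF : Continuous (fun x : ℝ × ℝ => F x.1 x.2))
    (hFnonneg : ∀ r ≥ (0:ℝ), ∀ z : ℝ, 0 ≤ F r z)
    (hp : Continuous (fun x : ℝ × ℝ => p x.1 x.2))
    (hprange : ∀ r ≥ (0:ℝ), ∀ z : ℝ, p r z ∈ Set.Icc (0:ℝ) 1)
    (hclose : ∀ r ≥ (0:ℝ), ∀ z : ℝ,
        |F r z - p r z| ≤ p r z / (1 + Real.cosh r ^ 2))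
    (hpmono : ∀ r ≥ (0:ℝ), Monotone (p r))
    (hpdiv : ∀ s0 : ℝ,
        Filter.Tendsto (fun t => ∫ r in (0:ℝ)..t, p r s0)
          Filter.atTop Filter.atTop)
    (hode : ∀ t ≥ (0:ℝ), HasDerivAt s (F (r0 + t) (s t)) t) :
    Filter.Tendsto s Filter.atTop Filter.atTop := by
  -- continuity of s on Ici 0
  have hscont : ContinuousOn s (Set.Ici 0) := fun t ht =>
    (hode t ht).continuousAt.continuousWithinAt
  -- key lower bound F ≥ p/2 for r ≥ 0
  have hFge : ∀ r ≥ (0:ℝ), ∀ z : ℝ, p r z / 2 ≤ F r z := by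
    intro r hr z
    have h1 : p r z / (1 + Real.cosh r ^ 2) ≤ p r z / 2 := by
      apply div_le_div_of_nonneg_left (hprange r hr z).1 (by norm_num)
      nlinarith [Real.one_le_cosh r]
    have h2 := (abs_le.1 (hclose r hr z)).1
    linarith
  -- s is monotone on Ici 0
  have hmono : MonotoneOn s (Set.Ici (0:ℝ)) := by
    apply monotoneOn_of_deriv_nonneg (convex_Ici 0) hscont
    · intro t ht
      rw [interior_Ici] at ht
      exact ((hode t (le_of_lt ht)).differentiableAt).differentiableWithinAt
    · intro t ht
      rw [interior_Ici] at ht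
      have ht' := Set.mem_Ioi.1 ht
      rw [(hode t ht'.le).deriv]
      exact hFnonneg _ (by linarith) _
  -- FTC lower bound
  have key : ∀ t ≥ (0:ℝ),
      s 0 + (∫ u in (0:ℝ)..t, p (r0 + u) (s 0)) / 2 ≤ s t := by
    intro t ht
    have hFc : ContinuousOn (fun u => F (r0 + u) (s u)) (Set.Icc 0 t) := by
      have hin : ContinuousOn (fun u => ((r0 + u, s u) : ℝ × ℝ)) (Set.Icc 0 t) :=
        ((continuous_const.add continuous_id).continuousOn).prodMk
          (hscont.mono (fun x hx => hx.1))
      exact hF.comp_continuousOn hin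
    have hFint : IntervalIntegrable (fun u => F (r0 + u) (s u))
        MeasureTheory.volume 0 t := by
      apply ContinuousOn.intervalIntegrable
      rwa [Set.uIcc_of_le ht]
    have hftc : (∫ u in (0:ℝ)..t, F (r0 + u) (s u)) = s t - s 0 := by
      apply intervalIntegral.integral_eq_sub_of_hasDerivAt
      · intro u hu
        rw [Set.uIcc_of_le ht] at hu
        exact hode u hu.1
      · exact hFint
    have hpc : ContinuousOn (fun u => p (r0 + u) (s 0)) (Set.Icc 0 t) :=
      hp.comp_continuousOn
        (((continuous_const.add continuous_id).continuousOn).prodMk continuousOn_const)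
    have hpint : IntervalIntegrable (fun u => p (r0 + u) (s 0))
        MeasureTheory.volume 0 t := by
      apply ContinuousOn.intervalIntegrable
      rwa [Set.uIcc_of_le ht]
    have hle : (∫ u in (0:ℝ)..t, p (r0 + u) (s 0)) / 2
        ≤ ∫ u in (0:ℝ)..t, F (r0 + u) (s u) := by
      rw [← intervalIntegral.integral_div]
      apply intervalIntegral.integral_mono_on ht (hpint.div_const 2) hFint
      intro u hu
      have hu0 : (0:ℝ) ≤ u := hu.1
      have hr : (0:ℝ) ≤ r0 + u := by linarith
      have h1 := hpmono _ hr (hmono (Set.self_mem_Ici) hu.1 hu.1)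
      have h2 := hFge _ hr (s u)
      linarith
    linarith [hftc ▸ hle]
  -- change of variables and conclusion
  have hGdiv := hpdiv (s 0)
  have hint : ∀ a b : ℝ, IntervalIntegrable (fun r => p r (s 0))
      MeasureTheory.volume a b :=
    fun a b => (hp.comp (continuous_id.prodMk continuous_const)).intervalIntegrable a b
  have hcomp : ∀ t : ℝ, (∫ u in (0:ℝ)..t, p (r0 + u) (s 0))
      = (∫ r in (0:ℝ)..(r0 + t), p r (s 0)) - (∫ r in (0:ℝ)..r0, p r (s 0)) := by
    intro t
    rw [intervalIntegral.integral_comp_add_left (fun r => p r (s 0)) r0, add_zero]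
    rw [← intervalIntegral.integral_add_adjacent_intervals (hint 0 r0) (hint r0 (r0 + t))]
    ring
  have hlim : Filter.Tendsto
      (fun t => s 0 + (∫ u in (0:ℝ)..t, p (r0 + u) (s 0)) / 2)
      Filter.atTop Filter.atTop := by
    simp only [hcomp]
    apply Filter.tendsto_atTop_add_const_left
    apply Filter.Tendsto.atTop_div_const (by norm_num)
    apply Filter.tendsto_atTop_add_const_right
    exact hGdiv.comp (Filter.tendsto_atTop_add_const_left _ r0 Filter.tendsto_id)
  exact Filter.tendsto_atTop_mono' _
    (Filter.eventually_atTop.2 ⟨0, key⟩) hlim
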